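/- Let (X,d,m) be a parabolic RCD(0,N) space and C ⊂ X × (0,+∞) a nonempty closed set which is locally the boundary of a locally perimeter minimizing set in X × ℝ; let d_C be the distance from C, d_0 the signed distance from X × {0} (positive on X × (−∞,0)), and d̄ := d_C − d_0 on X × (−∞,0). Let x̄ = (x, t_x) ∈ X × (−∞,0) and let γ : [0, d_C(x̄)] → X × ℝ be a connector for x̄ with endpoint γ(d_C(x̄)) = (y, t_y), and set s(x̄,γ) := 1 − |t_x − t_y| / d_C(x̄). Then the pointwise Lipschitz constant satisfies lip(d̄)(x̄) ≥ s(x̄,γ). -/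

import Mathlib

/-!
Common framework: metric measure spaces, relaxed gradients, BV/perimeter,
Cheeger energy, Sobolev spaces, Laplacians, heat kernels, parabolicity,
a synthetic `RCD(K,N)` predicate, Green's functions, and the `L²` product
`X ×₂ ℝ` used for half-space statements.
-/

open MeasureTheory Filter Topology Set Metric
open scoped ENNReal NNReal

noncomputable section

namespace HalfSpaceRCD

variable {X : Type*}

/-- Pointwise (upper) Lipschitz constant `lip f x` of a real valued function. -/
def lipConst [PseudoMetricSpace X] (f : X → ℝ) (x : X) : ℝ≥0∞ :=
  Filter.limsup (fun y => ENNReal.ofReal (|f x - f y| / dist x y)) (𝓝[≠] x)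

/-- A function is locally Lipschitz on a set `A`. -/
def LocLipOn [PseudoMetricSpace X] (f : X → ℝ) (A : Set X) : Prop :=
  ∀ x ∈ A, ∃ ε : ℝ, 0 < ε ∧ ∃ K : ℝ≥0, LipschitzOnWith K f (Metric.ball x ε ∩ A)

/-- Lipschitz functions with compact support contained in `A`
(the class `Lip_c(A)`). -/
def LipCompactIn [PseudoMetricSpace X] (f : X → ℝ) (A : Set X) : Prop :=
  (∃ K : ℝ≥0, LipschitzWith K f) ∧ HasCompactSupport f ∧ tsupport f ⊆ A

variable [MetricSpace X] [MeasurableSpace X]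

/-- Relaxed total variation `|Df|(A)` of `f : X → ℝ` on a set `A`, obtained by
relaxation of `∫_A lip g dμ` along locally Lipschitz approximations `g → f` in `L¹(A)`. -/
def variationOn (μ : Measure X) (f : X → ℝ) (A : Set X) : ℝ≥0∞ :=
  sInf { v : ℝ≥0∞ | ∃ g : ℕ → X → ℝ, (∀ n, LocLipOn (g n) A) ∧
    Tendsto (fun n => ∫⁻ x in A, ENNReal.ofReal |g n x - f x| ∂μ) atTop (𝓝 0) ∧
    v = Filter.liminf (fun n => ∫⁻ x in A, lipConst (g n) x ∂μ) atTop }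

/-- Relaxed `2`-Cheeger energy of `f` on a set `A`. -/
def cheegerOn (μ : Measure X) (f : X → ℝ) (A : Set X) : ℝ≥0∞ :=
  sInf { v : ℝ≥0∞ | ∃ g : ℕ → X → ℝ, (∀ n, LocLipOn (g n) A) ∧
    Tendsto (fun n => ∫⁻ x in A, (ENNReal.ofReal |g n x - f x|) ^ 2 ∂μ) atTop (𝓝 0) ∧
    v = Filter.liminf (fun n => ∫⁻ x in A, (lipConst (g n) x) ^ 2 ∂μ) atTop }

/-- Membership in the Sobolev space `W^{1,2}(A)`. -/
def MemW12 (μ : Measure X) (f : X → ℝ) (A : Set X) : Prop :=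
  MemLp f 2 (μ.restrict A) ∧ cheegerOn μ f A < ⊤

/-- Membership in `W^{1,2}_0(A)`: approximable by `Lip_c(A)` functions in energy. -/
def MemW120 (μ : Measure X) (f : X → ℝ) (A : Set X) : Prop :=
  MemW12 μ f A ∧ ∃ g : ℕ → X → ℝ, (∀ n, LipCompactIn (g n) A) ∧
    Tendsto (fun n => ∫⁻ x in A, (ENNReal.ofReal |g n x - f x|) ^ 2 ∂μ) atTop (𝓝 0) ∧
    Tendsto (fun n => cheegerOn μ (fun x => g n x - f x) A) atTop (𝓝 0)

/-- Membership in `W^{1,1}(A)`: integrable, of bounded variation, and the variation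
measure is absolutely continuous w.r.t. `μ` (it has an integrable density). -/
def MemW11 (μ : Measure X) (f : X → ℝ) (A : Set X) : Prop :=
  IntegrableOn f A μ ∧ ∃ G : X → ℝ, (∀ x, 0 ≤ G x) ∧ IntegrableOn G A μ ∧
    ∀ U : Set X, U ⊆ A → IsOpen U → variationOn μ f U = ∫⁻ x in U, ENNReal.ofReal (G x) ∂μ

/-- Membership in `W^{1,1}_0(A)`. -/
def MemW110 (μ : Measure X) (f : X → ℝ) (A : Set X) : Prop :=
  MemW11 μ f A ∧ ∃ g : ℕ → X → ℝ, (∀ n, LipCompactIn (g n) A) ∧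
    Tendsto (fun n => ∫⁻ x in A, ENNReal.ofReal |g n x - f x| ∂μ) atTop (𝓝 0) ∧
    Tendsto (fun n => variationOn μ (fun x => g n x - f x) A) atTop (𝓝 0)

/-- Membership in `W^{1,1}_loc(X)`. -/
def MemW11Loc (μ : Measure X) (f : X → ℝ) : Prop :=
  ∀ (x : X) (r : ℝ), 0 < r → MemW11 μ f (Metric.ball x r)

/-- The pointwise pairing `∇f ⋅ ∇g` defined by polarization of slopes. -/
def gradPairing (f g : X → ℝ) (x : X) : ℝ :=
  ((lipConst (fun y => f y + g y) x).toReal ^ 2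
    - (lipConst (fun y => f y - g y) x).toReal ^ 2) / 4

/-- `f ∈ D(Δ, B)` with `Δ f = h` on `B`. -/
def HasLaplacianOn (μ : Measure X) (f h : X → ℝ) (B : Set X) : Prop :=
  MemW12 μ f B ∧ MemLp h 2 (μ.restrict B) ∧
    ∀ g : X → ℝ, MemW120 μ g B →
      ∫ y in B, g y * h y ∂μ = -∫ y in B, gradPairing g f y ∂μ

/-! ## The synthetic `RCD(K,N)` condition -/

/-- The coefficient `s_{K,N}(t)` of the model space. -/
def modelCoeff (K N t : ℝ) : ℝ :=
  if 0 < K then Real.sqrt ((N - 1) / K) * Real.sin (t * Real.sqrt (K / (N - 1)))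
  else if K = 0 then t
  else Real.sqrt ((N - 1) / (-K)) * Real.sinh (t * Real.sqrt ((-K) / (N - 1)))

/-- The model volume `V_{K,N}(r)` (up to the constant `N ω_N`). -/
def modelVolume (K N r : ℝ) : ℝ := ∫ t in (0:ℝ)..r, modelCoeff K N t ^ (N - 1)

/-- Synthetic encoding of the `RCD(K,N)` condition on a metric measure space:
a complete, proper, geodesic metric measure space with measure finite on bounded
sets and of full support, which is infinitesimally Hilbertian (the `2`-Cheeger
energy satisfies the parallelogram identity) and satisfies the sharp
Bishop–Gromov volume comparison of the curvature-dimension condition `CD(K,N)`. -/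
structure IsRCD (K N : ℝ) {X : Type*} [MetricSpace X] [MeasurableSpace X]
    (μ : Measure X) : Prop where
  one_le_dim : 1 ≤ N
  complete : CompleteSpace X
  proper : ProperSpace X
  geodesic : ∀ x y : X, ∃ z : X, dist x z = dist x y / 2 ∧ dist z y = dist x y / 2
  finiteOnBounded : ∀ (x : X) (r : ℝ), μ (Metric.ball x r) < ⊤
  fullSupport : ∀ (x : X) (r : ℝ), 0 < r → 0 < μ (Metric.ball x r)
  infHilbertian : ∀ f g : X → ℝ, MemLp f 2 μ → MemLp g 2 μ →
    cheegerOn μ (fun x => f x + g x) Set.univ + cheegerOn μ (fun x => f x - g x) Set.univ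
      = 2 * cheegerOn μ f Set.univ + 2 * cheegerOn μ g Set.univ
  bishopGromov : ∀ (x : X) (r R : ℝ), 0 < r → r ≤ R →
    μ (Metric.ball x R) * ENNReal.ofReal (modelVolume K N r)
      ≤ μ (Metric.ball x r) * ENNReal.ofReal (modelVolume K N R)

/-! ## Heat kernel and parabolicity -/

/-- `p` is the heat kernel of the metric measure space `(X, d, μ)`: a symmetric,
measurable, stochastically complete kernel satisfying the Chapman–Kolmogorov
identity, whose associated semigroup `P_t f(x) = ∫ p_t(x,y) f(y) dμ(y)` is the
`L²`-gradient flow of the Cheeger energy. -/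
structure IsHeatKernel {X : Type*} [MetricSpace X] [MeasurableSpace X] (μ : Measure X)
    (p : ℝ → X → X → ℝ) : Prop where
  nonneg : ∀ t x y, 0 < t → 0 ≤ p t x y
  symm : ∀ t x y, p t x y = p t y x
  meas : ∀ t : ℝ, Measurable fun q : X × X => p t q.1 q.2
  timeCont : ∀ x y, ContinuousOn (fun t => p t x y) (Set.Ioi (0:ℝ))
  chapman : ∀ s t : ℝ, 0 < s → 0 < t → ∀ x y, p (s + t) x y = ∫ z, p s x z * p t z y ∂μ
  stochasticallyComplete : ∀ t : ℝ, 0 < t → ∀ x, ∫ y, p t x y ∂μ = 1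
  l2Approx : ∀ f : X → ℝ, LipCompactIn f Set.univ →
    Tendsto (fun t : ℝ => ∫ x, ((∫ y, p t x y * f y ∂μ) - f x) ^ 2 ∂μ) (𝓝[>] (0:ℝ)) (𝓝 0)
  gradientFlow : ∀ f g : X → ℝ, LipCompactIn f Set.univ → LipCompactIn g Set.univ →
    ∀ t : ℝ, 0 < t →
      HasDerivAt (fun s : ℝ => ∫ x, (∫ y, p s x y * f y ∂μ) * g x ∂μ)
        (-(((cheegerOn μ (fun x => (∫ y, p t x y * f y ∂μ) + g x) Set.univ).toReal -
            (cheegerOn μ (fun x => (∫ y, p t x y * f y ∂μ) - g x) Set.univ).toReal) / 4)) t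

/-- A metric measure space with heat kernel `p` is parabolic if
`∫_1^∞ p_t(x,y) dt = +∞` for every pair of points. -/
def Parabolic {X : Type*} [MetricSpace X] [MeasurableSpace X] (μ : Measure X)
    (p : ℝ → X → X → ℝ) : Prop :=
  ∀ x y : X, ∫⁻ t in Set.Ioi (1:ℝ), ENNReal.ofReal (p t x y) = ⊤

/-! ## Sets of finite perimeter and minimizers -/

/-- Perimeter of `E` relative to `A`, i.e. the total variation of `1_E` on `A`. -/
def perimeter (μ : Measure X) (E A : Set X) : ℝ≥0∞ :=
  variationOn μ (Set.indicator E fun _ => (1:ℝ)) A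

/-- `s` is compactly contained in `t` (`s ⋐ t`). -/
def CompactlyContained [TopologicalSpace X] (s t : Set X) : Prop :=
  IsCompact (closure s) ∧ closure s ⊆ t

/-- The symmetric difference of two sets. -/
def symmDiffSet (E F : Set X) : Set X := (E \ F) ∪ (F \ E)

/-- `E` is perimeter minimizing in the open set `Ω`. -/
def PerimMinimizingIn (μ : Measure X) (E Ω : Set X) : Prop :=
  E ⊆ Ω ∧ (∀ x ∈ Ω, ∀ r : ℝ, 0 < r → perimeter μ E (Metric.ball x r ∩ Ω) < ⊤) ∧
    ∀ x ∈ Ω, ∀ r : ℝ, 0 < r → ∀ F : Set X, F ⊆ Ω →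
      CompactlyContained (symmDiffSet F E) (Metric.ball x r ∩ Ω) →
      perimeter μ E (Metric.ball x r ∩ Ω) ≤ perimeter μ F (Metric.ball x r ∩ Ω)

/-- `E` is (globally) perimeter minimizing. -/
def PerimMinimizing (μ : Measure X) (E : Set X) : Prop :=
  PerimMinimizingIn μ E Set.univ

/-- `E` is locally perimeter minimizing in the open set `Ω`. -/
def LocPerimMinimizingIn (μ : Measure X) (E Ω : Set X) : Prop :=
  E ⊆ Ω ∧ (∀ x ∈ Ω, ∀ r : ℝ, 0 < r → perimeter μ E (Metric.ball x r ∩ Ω) < ⊤) ∧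
    ∀ x ∈ Ω, ∃ r : ℝ, 0 < r ∧ ∀ F : Set X, F ⊆ Ω →
      CompactlyContained (symmDiffSet F E) (Metric.ball x r ∩ Ω) →
      perimeter μ E (Metric.ball x r ∩ Ω) ≤ perimeter μ F (Metric.ball x r ∩ Ω)

/-- `C` is locally the boundary of a locally perimeter minimizing set: every point has
an open neighbourhood `U` and a set `E ⊆ U` (open representative) locally minimizing
the perimeter in `U` with `C ∩ U = ∂E ∩ U`. -/
def IsLocalMinimizingBoundary (μ : Measure X) (C : Set X) : Prop :=
  ∀ x : X, ∃ U : Set X, IsOpen U ∧ x ∈ U ∧ ∃ E : Set X, E ⊆ U ∧ IsOpen E ∧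
    LocPerimMinimizingIn μ E U ∧ C ∩ U = frontier E ∩ U

/-- `S` is an area minimizing boundary in the open set `A`. -/
def IsAreaMinBoundary (μ : Measure X) (S A : Set X) : Prop :=
  ∃ E : Set X, E ⊆ A ∧ PerimMinimizingIn μ E A ∧ frontier E ∩ A = S

/-! ## Regular sets and Green's functions -/

/-- An open precompact set `B` with `closure B ≠ X` is regular if the Dirichlet
problem for harmonic functions with continuous boundary data is solvable on `B`. -/
def IsRegularSet (μ : Measure X) (B : Set X) : Prop :=
  IsOpen B ∧ IsCompact (closure B) ∧ closure B ≠ Set.univ ∧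
    ∀ f : X → ℝ, MemW12 μ f B → ContinuousOn f (frontier B) →
      ∃ u : X → ℝ, HasLaplacianOn μ u (fun _ => 0) B ∧ ContinuousOn u (closure B) ∧
        MemW120 μ (fun y => u y - f y) B ∧ Set.EqOn u f (frontier B)

/-- An exhaustion of `X` by regular sets. -/
def IsRegularExhaustion (μ : Measure X) (B : ℕ → Set X) : Prop :=
  (∀ i, IsRegularSet μ (B i)) ∧ (∀ i, CompactlyContained (B i) (B (i + 1))) ∧
    (⋃ i, B i) = Set.univ

/-- `G` is a Green's function on the regular set `B` with pole `x`:
`G ∈ W^{1,1}_0(B) ∩ C(closure B \ {x})`, `Δ G = -δ_x` in the distributional sense in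
`B`, and `G = 0` on `∂B`. -/
structure IsGreenOn (μ : Measure X) (B : Set X) (x : X) (G : X → ℝ) : Prop where
  mem : MemW110 μ G B
  cont : ContinuousOn G (closure B \ {x})
  deltaEq : ∀ g : X → ℝ, LipCompactIn g B → ∫ z in B, gradPairing g G z ∂μ = g x
  bdry : Set.EqOn G 0 (frontier B)

/-- `G` is a Green's function on `X` with pole `x`:
`G ∈ W^{1,1}_loc(X) ∩ C(X \ {x})` and `Δ G = -δ_x` in the distributional sense. -/
structure IsGreenGlobal (μ : Measure X) (x : X) (G : X → ℝ) : Prop where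
  mem : MemW11Loc μ G
  cont : ContinuousOn G {x}ᶜ
  deltaEq : ∀ g : X → ℝ, LipCompactIn g Set.univ → ∫ z, gradPairing g G z ∂μ = g x

/-! ## The `L²` product of two metric measure spaces -/

instance l2ProdMeasurableSpace {α β : Type*} [MeasurableSpace α] [MeasurableSpace β] :
    MeasurableSpace (WithLp 2 (α × β)) :=
  MeasurableSpace.comap (WithLp.ofLp (p := 2)) (inferInstanceAs (MeasurableSpace (α × β)))

/-- The product measure on the `L²` product. -/
def l2prodMeasure {α β : Type*} [MeasurableSpace α] [MeasurableSpace β]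
    (μ : Measure α) (ν : Measure β) : Measure (WithLp 2 (α × β)) :=
  Measure.map (WithLp.toLp 2) (μ.prod ν : Measure (α × β))

/-- First coordinate of a point of the `L²` product. -/
def fst2 {α β : Type*} (q : WithLp 2 (α × β)) : α := (WithLp.equiv 2 (α × β) q).1

/-- Second coordinate of a point of the `L²` product. -/
def snd2 {α β : Type*} (q : WithLp 2 (α × β)) : β := (WithLp.equiv 2 (α × β) q).2

/-- The point `(a, b)` of the `L²` product. -/
def mk2 {α β : Type*} (a : α) (b : β) : WithLp 2 (α × β) :=
  (WithLp.equiv 2 (α × β)).symm (a, b)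

instance l2ProdBorelSpace {α β : Type*} [MetricSpace α] [MetricSpace β]
    [MeasurableSpace α] [MeasurableSpace β] [BorelSpace α] [BorelSpace β]
    [SecondCountableTopology α] [SecondCountableTopology β] :
    BorelSpace (WithLp 2 (α × β)) :=
  ⟨(WithLp.borelSpace 2 α β).measurable_eq⟩

/-! ## Weighted Riemannian manifolds, minimality, moduli of parabolicity -/

/-- Weighted area functional: the `d`-dimensional Hausdorff measure weighted by `w`. -/
def wArea {P : Type*} [MetricSpace P] [MeasurableSpace P] [BorelSpace P]
    (d : ℝ) (w : P → ℝ) (A : Set P) : ℝ≥0∞ :=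
  ∫⁻ x in A, ENNReal.ofReal (w x) ∂(μH[d])

/-- Synthetic encoding of an `n`-dimensional weighted Riemannian manifold
`(M, d_g, e^{-V} m_g)` with boundary `Bd`: the measure is the `n`-dimensional
Hausdorff measure with the continuous weight `e^{-V}`, the distance is geodesic,
and around any point the space is `(1+δ)`-bi-Lipschitz to a subset of `ℝⁿ`
at every scale `δ`. -/
structure IsWeightedManifoldMM (n : ℕ) (M : Type*) [MetricSpace M] [MeasurableSpace M]
    [BorelSpace M] (ν : Measure M) (V : M → ℝ) (Bd : Set M) : Prop where
  weightCont : Continuous V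
  measure_eq : ν = (μH[(n : ℝ)] : Measure M).withDensity fun x => ENNReal.ofReal (Real.exp (-V x))
  bd_closed : IsClosed Bd
  geodesic : ∀ x y : M, ∃ z : M, dist x z = dist x y / 2 ∧ dist z y = dist x y / 2
  charts : ∀ x : M, ∀ δ : ℝ, 0 < δ → ∃ ε : ℝ, 0 < ε ∧ ∃ f : M → EuclideanSpace ℝ (Fin n),
    (∀ y ∈ Metric.ball x ε, ∀ z ∈ Metric.ball x ε,
      dist y z / (1 + δ) ≤ dist (f y) (f z) ∧ dist (f y) (f z) ≤ (1 + δ) * dist y z) ∧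
    (x ∉ Bd → Metric.ball x ε ∩ Bd = ∅)

/-- A hypersurface `S` is minimal with free boundary on `Bd` (equivalently, it is a
critical point of the `d`-dimensional weighted area functional with weight `w`
among deformations preserving `Bd`): for every compactly supported bi-Lipschitz
deformation family `Φ_t` with `Φ_0 = id` preserving `Bd`, the weighted area of
`Φ_t '' S` has vanishing derivative at `t = 0`. -/
def IsMinimalFreeBoundary {P : Type*} [MetricSpace P] [MeasurableSpace P] [BorelSpace P]
    (d : ℝ) (w : P → ℝ) (Bd : Set P) (S : Set P) : Prop :=
  ∀ (Φ : ℝ → P → P) (Kc : Set P), IsCompact Kc →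
    Φ 0 = id →
    (∀ (t : ℝ) (y : P), y ∉ Kc → Φ t y = y) →
    (∀ t : ℝ, Function.Bijective (Φ t)) →
    (∃ L : ℝ≥0, ∀ t ∈ Set.Icc (-1:ℝ) 1, LipschitzWith L (Φ t)) →
    (∃ L : ℝ≥0, ∀ y : P, LipschitzWith L fun t => Φ t y) →
    (∀ t : ℝ, Φ t '' Bd ⊆ Bd) →
    deriv (fun t : ℝ => (wArea d w (Φ t '' S ∩ Kc)).toReal) 0 = 0

/-- `P` is a modulus of parabolicity. -/
def ModulusOfParabolicity (P : ℝ → ℝ) : Prop :=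
  (∀ t : ℝ, 0 ≤ t → 0 < P t) ∧ ∫⁻ t in Set.Ioi (1:ℝ), ENNReal.ofReal (t / P t) = ⊤

/-- The oscillation `Osc_{x,r}(S)` of a set `S ⊆ M ×₂ ℝ` through `(x,0)`. -/
def Osc {M : Type*} [MetricSpace M] (x : M) (r : ℝ) (S : Set (WithLp 2 (M × ℝ))) : ℝ :=
  sSup { a : ℝ | ∃ q ∈ S, fst2 q ∈ Metric.ball x r ∧ snd2 q ∈ Set.Ioo (-r) r ∧ a = |snd2 q| }

/-- Upper oscillation `Osc⁺_{x,r}(S)`. -/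
def OscPlus {M : Type*} [MetricSpace M] (x : M) (r : ℝ) (S : Set (WithLp 2 (M × ℝ))) : ℝ :=
  sSup { a : ℝ | ∃ q ∈ S, fst2 q ∈ Metric.ball x r ∧ snd2 q ∈ Set.Ioo 0 r ∧ a = |snd2 q| }

lemma sq_eq_of_nonneg' {a b : ℝ} (ha : 0 ≤ a) (hb : 0 ≤ b) (h : a ^ 2 = b ^ 2) : a = b := by
  nlinarith [sq_nonneg (a - b), sq_nonneg (a + b)]

lemma minkowski_eq_case {p1 q1 p2 q2 p3 q3 h L : ℝ}
    (hp1 : 0 ≤ p1) (hq1 : 0 ≤ q1) (hp2 : 0 ≤ p2) (hq2 : 0 ≤ q2)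
    (hp3 : 0 ≤ p3) (hq3 : 0 ≤ q3)
    (e1 : p1 ^ 2 + q1 ^ 2 = h ^ 2) (e2 : p2 ^ 2 + q2 ^ 2 = (L - h) ^ 2)
    (e3 : p3 ^ 2 + q3 ^ 2 = L ^ 2)
    (tp : p3 ≤ p1 + p2) (tq : q3 ≤ q1 + q2)
    (hh : 0 < h) (hhL : h ≤ L) :
    q1 * L = q3 * h := by
  have hp3sq : p3 ^ 2 ≤ (p1 + p2) ^ 2 := pow_le_pow_left₀ hp3 tp 2
  have hq3sq : q3 ^ 2 ≤ (q1 + q2) ^ 2 := pow_le_pow_left₀ hq3 tq 2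
  have expand : (p1 + p2) ^ 2 + (q1 + q2) ^ 2
      = h ^ 2 + (L - h) ^ 2 + 2 * (p1 * p2 + q1 * q2) := by linear_combination e1 + e2
  have idL : L ^ 2 = h ^ 2 + (L - h) ^ 2 + 2 * (h * (L - h)) := by ring
  have key1 : h * (L - h) ≤ p1 * p2 + q1 * q2 := by linarith
  have hL0 : 0 ≤ h * (L - h) := mul_nonneg hh.le (by linarith)
  have cs : (p1 * p2 + q1 * q2) ^ 2 + (p1 * q2 - p2 * q1) ^ 2 = h ^ 2 * (L - h) ^ 2 := by
    linear_combination (p2 ^ 2 + q2 ^ 2) * e1 + h ^ 2 * e2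
  have key2 : (p1 * p2 + q1 * q2) ^ 2 ≤ (h * (L - h)) ^ 2 := by
    nlinarith [sq_nonneg (p1 * q2 - p2 * q1)]
  have key3 : p1 * p2 + q1 * q2 = h * (L - h) := by
    have := pow_le_pow_left₀ hL0 key1 2
    exact sq_eq_of_nonneg' (by linarith) hL0 (le_antisymm key2 this)
  have key4 : p1 * q2 = p2 * q1 := by
    have h0 : (p1 * q2 - p2 * q1) ^ 2 = 0 := by
      linear_combination cs - (p1 * p2 + q1 * q2 + h * (L - h)) * key3
    have := pow_eq_zero_iff (n := 2) (by norm_num) |>.mp h0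
    linarith
  have key5 : q3 = q1 + q2 := by
    have h1 : (q1 + q2) ^ 2 ≤ q3 ^ 2 := by linarith
    exact sq_eq_of_nonneg' hq3 (by linarith) (le_antisymm hq3sq h1)
  have key6 : q1 * (L - h) = q2 * h := by
    have hsq : (q1 * (L - h)) ^ 2 = (q2 * h) ^ 2 := by
      linear_combination -q1 ^ 2 * e2 + q2 ^ 2 * e1 - (q1 * p2 + q2 * p1) * key4
    exact sq_eq_of_nonneg' (mul_nonneg hq1 (by linarith)) (mul_nonneg hq2 hh.le) hsq
  linear_combination key6 - h * key5

lemma l2_dist_sq {α β : Type*} [PseudoMetricSpace α] [PseudoMetricSpace β]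
    (f g : WithLp 2 (α × β)) :
    dist f g ^ 2 = dist f.fst g.fst ^ 2 + dist f.snd g.snd ^ 2 := by
  have h := WithLp.prod_dist_eq_add (p := 2) (by norm_num) f g
  rw [h]
  have h2 : ((2:ℝ≥0∞)).toReal = (2:ℝ) := by norm_num
  rw [h2]
  rw [← Real.rpow_natCast (_ ^ (1/(2:ℝ))) 2, ← Real.rpow_mul (by positivity)]
  norm_num

/-- **Slope of a connector bounds the pointwise Lipschitz constant of `d̄`.** Let
`(X,d,m)` be a parabolic `RCD(0,N)` space, `C ⊆ X × (0,∞)` nonempty, closed, and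
locally the boundary of a locally perimeter minimizing set in `X × ℝ`, and let
`d̄(q) = d_C(q) + snd q` on the lower half-space. Let `xb ∈ X × (-∞,0)` and let
`γ : [0, d_C(xb)] → X × ℝ` be a connector for `xb` (a unit-speed geodesic from `xb`
realizing the distance to `C`). Then `lip d̄ (xb) ≥ s(xb,γ)`, where the slope is
`s(xb,γ) = 1 - |snd xb - snd (γ L)| / L` with `L = d_C(xb)`. -/
theorem connectorSlopeBound {X : Type*} [MetricSpace X] [MeasurableSpace X] [BorelSpace X]
    [SecondCountableTopology X]
    (μ : Measure X) (N : ℝ) (hRCD : IsRCD 0 N μ)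
    (p : ℝ → X → X → ℝ) (hp : IsHeatKernel μ p) (hpar : Parabolic μ p)
    (C : Set (WithLp 2 (X × ℝ))) (hne : C.Nonempty) (hcl : IsClosed C)
    (hsub : C ⊆ {q | 0 < snd2 q})
    (hC : IsLocalMinimizingBoundary (l2prodMeasure μ volume) C)
    (xb : WithLp 2 (X × ℝ)) (hxb : snd2 xb < 0)
    (γ : ℝ → WithLp 2 (X × ℝ)) (L : ℝ) (hL : L = Metric.infDist xb C)
    (hγ0 : γ 0 = xb) (hγL : γ L ∈ C)
    (hgeo : ∀ s ∈ Set.Icc (0:ℝ) L, ∀ t ∈ Set.Icc (0:ℝ) L, dist (γ s) (γ t) = |s - t|) :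
    ENNReal.ofReal (1 - |snd2 xb - snd2 (γ L)| / L)
      ≤ lipConst (fun q => Metric.infDist q C + snd2 q) xb := by
  show _ ≤ Filter.limsup (fun y => ENNReal.ofReal
      (|(Metric.infDist xb C + snd2 xb) - (Metric.infDist y C + snd2 y)| / dist xb y))
      (𝓝[≠] xb)
  -- basic facts
  have hxbC : xb ∉ C := fun hmem => absurd (hsub hmem) (not_lt.mpr hxb.le)
  have hL0 : 0 < L := hL ▸ ((hcl.notMem_iff_infDist_pos hne).mp hxbC)
  have hsndeq : ∀ q : WithLp 2 (X × ℝ), snd2 q = q.snd := fun _ => rfl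
  set c : ℝ := 1 - |snd2 xb - snd2 (γ L)| / L with hc
  set F : WithLp 2 (X × ℝ) → ℝ≥0∞ := fun y => ENNReal.ofReal
      (|(Metric.infDist xb C + snd2 xb) - (Metric.infDist y C + snd2 y)| / dist xb y) with hF
  -- distances along the geodesic
  have hmem0 : (0:ℝ) ∈ Set.Icc (0:ℝ) L := ⟨le_rfl, hL0.le⟩
  have hmemL : L ∈ Set.Icc (0:ℝ) L := ⟨hL0.le, le_rfl⟩
  have d0L : dist (γ 0) (γ L) = L := by
    rw [hgeo 0 hmem0 L hmemL]; rw [abs_of_nonpos (by linarith)]; ring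
  -- per-point estimate
  have hev : ∀ h ∈ Set.Ioo (0:ℝ) L, ENNReal.ofReal c ≤ F (γ h) := by
    intro h hh
    obtain ⟨hh0, hhL⟩ := hh
    have hmemh : h ∈ Set.Icc (0:ℝ) L := ⟨hh0.le, hhL.le⟩
    have d0h : dist (γ 0) (γ h) = h := by
      rw [hgeo 0 hmem0 h hmemh, abs_of_nonpos (by linarith)]; ring
    have dhL : dist (γ h) (γ L) = L - h := by
      rw [hgeo h hmemh L hmemL, abs_of_nonpos (by linarith)]; ring
    -- infDist of γ h
    have hdist_xb_h : dist xb (γ h) = h := by rw [← hγ0, d0h]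
    have hinf_le : Metric.infDist (γ h) C ≤ L - h := by
      calc Metric.infDist (γ h) C ≤ dist (γ h) (γ L) := Metric.infDist_le_dist_of_mem hγL
        _ = L - h := dhL
    have hinf_ge : L - h ≤ Metric.infDist (γ h) C := by
      have h1 : Metric.infDist xb C ≤ Metric.infDist (γ h) C + dist xb (γ h) :=
        Metric.infDist_le_infDist_add_dist
      rw [hdist_xb_h] at h1
      linarith [hL ▸ h1]
    have hinf : Metric.infDist (γ h) C = L - h := le_antisymm hinf_le hinf_ge
    -- the Minkowski equality case
    have qlin : dist (γ 0).snd (γ h).snd * L = dist (γ 0).snd (γ L).snd * h := by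
      have e1 := l2_dist_sq (γ 0) (γ h)
      have e2 := l2_dist_sq (γ h) (γ L)
      have e3 := l2_dist_sq (γ 0) (γ L)
      rw [d0h] at e1; rw [dhL] at e2; rw [d0L] at e3
      exact minkowski_eq_case dist_nonneg dist_nonneg dist_nonneg dist_nonneg
        dist_nonneg dist_nonneg e1.symm e2.symm e3.symm
        (dist_triangle (γ 0).fst (γ h).fst (γ L).fst)
        (dist_triangle (γ 0).snd (γ h).snd (γ L).snd) hh0 hhL.le
    have hq1 : |snd2 xb - snd2 (γ h)| = |snd2 xb - snd2 (γ L)| * h / L := by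
      have := qlin
      rw [Real.dist_eq, Real.dist_eq, ← hsndeq, ← hsndeq, ← hsndeq, hγ0] at this
      field_simp
      linarith [this]
    have habs : h * c ≤ |(Metric.infDist xb C + snd2 xb)
        - (Metric.infDist (γ h) C + snd2 (γ h))| := by
      have heq : (Metric.infDist xb C + snd2 xb) - (Metric.infDist (γ h) C + snd2 (γ h))
          = h + (snd2 xb - snd2 (γ h)) := by rw [hinf, ← hL]; ring
      rw [heq]
      have h1 : h - |snd2 xb - snd2 (γ h)| ≤ |h + (snd2 xb - snd2 (γ h))| := by
        have := abs_add_le (h + (snd2 xb - snd2 (γ h))) (-(snd2 xb - snd2 (γ h)))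
        simp only [abs_neg, add_neg_cancel_right] at this
        rw [abs_of_pos hh0] at this
        linarith
      have h2 : h * c = h - |snd2 xb - snd2 (γ L)| * h / L := by
        rw [hc]; field_simp
      rw [h2, ← hq1]
      exact h1
    -- conclude
    rw [hF]
    apply ENNReal.ofReal_le_ofReal
    rw [hdist_xb_h, le_div_iff₀ hh0]
    calc c * h = h * c := by ring
      _ ≤ _ := habs
  -- the map of filters
  have htend : Tendsto γ (𝓝[>] (0:ℝ)) (𝓝[≠] xb) := by
    rw [tendsto_nhdsWithin_iff]
    constructor
    · rw [Metric.tendsto_nhds]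
      intro ε hε
      filter_upwards [Ioo_mem_nhdsGT (lt_min hε hL0)] with h hh
      have hmemh : h ∈ Set.Icc (0:ℝ) L := ⟨hh.1.le, hh.2.trans_le (min_le_right _ _) |>.le⟩
      have : dist (γ h) xb = h := by
        rw [← hγ0, hgeo h hmemh 0 hmem0, abs_of_nonneg (by linarith [hh.1])]; ring
      rw [this]; exact hh.2.trans_le (min_le_left _ _)
    · filter_upwards [Ioo_mem_nhdsGT hL0] with h hh
      intro heq
      have hmemh : h ∈ Set.Icc (0:ℝ) L := ⟨hh.1.le, hh.2.le⟩
      have : dist (γ h) (γ 0) = h := by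
        rw [hgeo h hmemh 0 hmem0, abs_of_nonneg (by linarith [hh.1])]; ring
      rw [heq, hγ0, dist_self] at this
      exact hh.1.ne' this.symm
  -- limsup chain
  have hmap : Filter.limsup F (Filter.map γ (𝓝[>] (0:ℝ))) = Filter.limsup (F ∘ γ) (𝓝[>] (0:ℝ)) := by
    rw [Filter.limsup, Filter.limsup, Filter.map_map]
  calc ENNReal.ofReal c ≤ Filter.limsup (F ∘ γ) (𝓝[>] (0:ℝ)) := by
        apply Filter.le_limsup_of_frequently_le
        · apply Filter.Eventually.frequently
          filter_upwards [Ioo_mem_nhdsGT hL0] with h hh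
          exact hev h hh
        · isBoundedDefault
      _ = Filter.limsup F (Filter.map γ (𝓝[>] (0:ℝ))) := hmap.symm
      _ ≤ Filter.limsup F (𝓝[≠] xb) := Filter.limsup_le_limsup_of_le htend


end HalfSpaceRCD
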